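/- Let G be a finite ℤ-gain graph that is (2,3,2)-sparse, and let H and K be (2,3,2)-tight subgraphs of G such that at least one of H, K is balanced and H ∩ K has at least two vertices. Then H ∪ K is (2,3,2)-tight; moreover, either H ∩ K is (2,3,2)-tight, or H ∩ K consists of exactly two isolated vertices and H ∪ K is unbalanced. -/

import Mathlib

/-- A `ℤ`-gain graph: a multigraph with source and target maps together with a
gain map into `ℤ`. -/
structure GainGraph (V : Type*) (E : Type*) where
  src : E → V
  tgt : E → V
  gain : E → ℤ

/-- A subgraph of a gain graph: subsets of vertices and edges such that the
endvertices of each chosen edge are chosen. -/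
structure GainGraph.Subgraph {V E : Type*} (G : GainGraph V E) where
  verts : Set V
  edges : Set E
  src_mem : ∀ e ∈ edges, G.src e ∈ verts
  tgt_mem : ∀ e ∈ edges, G.tgt e ∈ verts

namespace GainGraph

variable {V E : Type*} {G : GainGraph V E}

/-- The union of two subgraphs, taken componentwise. -/
def Subgraph.union (H K : G.Subgraph) : G.Subgraph where
  verts := H.verts ∪ K.verts
  edges := H.edges ∪ K.edges
  src_mem := by
    rintro e (he | he)
    exacts [Or.inl (H.src_mem e he), Or.inr (K.src_mem e he)]
  tgt_mem := by
    rintro e (he | he)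
    exacts [Or.inl (H.tgt_mem e he), Or.inr (K.tgt_mem e he)]

/-- The intersection of two subgraphs, taken componentwise. -/
def Subgraph.inter (H K : G.Subgraph) : G.Subgraph where
  verts := H.verts ∩ K.verts
  edges := H.edges ∩ K.edges
  src_mem := fun e he => ⟨H.src_mem e he.1, K.src_mem e he.2⟩
  tgt_mem := fun e he => ⟨H.tgt_mem e he.1, K.tgt_mem e he.2⟩

/-- The whole gain graph, viewed as a subgraph of itself. -/
def top (G : GainGraph V E) : G.Subgraph where
  verts := Set.univ
  edges := Set.univ
  src_mem := fun _ _ => Set.mem_univ _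
  tgt_mem := fun _ _ => Set.mem_univ _

/-- Walks in a subgraph `H` of a gain graph, traversing edges of `H` either
forwards or backwards. -/
inductive Walk (G : GainGraph V E) (H : G.Subgraph) : V → V → Type _
  | nil (v : V) (hv : v ∈ H.verts) : Walk G H v v
  | fwd (e : E) (he : e ∈ H.edges) {v : V} (w : Walk G H (G.tgt e) v) :
      Walk G H (G.src e) v
  | bwd (e : E) (he : e ∈ H.edges) {v : V} (w : Walk G H (G.src e) v) :
      Walk G H (G.tgt e) v

/-- The gain of a walk: the sum of the gains of the edges traversed forwards
minus the sum of the gains of the edges traversed backwards. -/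
def Walk.gainSum {H : G.Subgraph} : ∀ {u v : V}, Walk G H u v → ℤ
  | _, _, .nil _ _ => 0
  | _, _, .fwd e _ w => G.gain e + w.gainSum
  | _, _, .bwd e _ w => -G.gain e + w.gainSum

/-- A subgraph is balanced if every closed walk in it has gain `0`. -/
def Subgraph.Balanced (H : G.Subgraph) : Prop :=
  ∀ (v : V) (w : Walk G H v v), w.gainSum = 0

/-- A subgraph is connected if it is nonempty and any two of its vertices are
joined by a walk in it. -/
def Subgraph.Connected (H : G.Subgraph) : Prop :=
  H.verts.Nonempty ∧ ∀ u ∈ H.verts, ∀ v ∈ H.verts, Nonempty (Walk G H u v)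

/-- The count `f(H) = 2|V(H)| - |E(H)|` of a subgraph. -/
noncomputable def fCount (H : G.Subgraph) : ℤ :=
  2 * (H.verts.ncard : ℤ) - (H.edges.ncard : ℤ)

/-- A gain graph is `(2,3,l)`-sparse if `f(H) ≥ l` for every nonempty
subgraph `H` and `f(K) ≥ 3` for every balanced subgraph `K` with at least one
edge. -/
def Sparse (l : ℤ) (G : GainGraph V E) : Prop :=
  (∀ H : G.Subgraph, H.verts.Nonempty → l ≤ fCount H) ∧
  (∀ H : G.Subgraph, H.Balanced → H.edges.Nonempty → 3 ≤ fCount H)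

/-- A subgraph `H` of a `(2,3,l)`-sparse gain graph is `(2,3,l)`-tight if
`f(H) = l`, or `H` is balanced with `f(H) = 3`, or `H` is a single isolated
vertex. -/
def Subgraph.Tight (l : ℤ) (H : G.Subgraph) : Prop :=
  fCount H = l ∨ (H.Balanced ∧ fCount H = 3) ∨
    (∃ v, H.verts = {v} ∧ H.edges = ∅)


lemma Walk.end_mem {H : G.Subgraph} : ∀ {u v : V}, Walk G H u v → v ∈ H.verts
  | _, _, .nil _ hv => hv
  | _, _, .fwd _ _ w => w.end_mem
  | _, _, .bwd _ _ w => w.end_mem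

def Walk.append {H : G.Subgraph} : ∀ {u v w : V}, Walk G H u v → Walk G H v w → Walk G H u w
  | _, _, _, .nil _ _, q => q
  | _, _, _, .fwd e he p, q => .fwd e he (p.append q)
  | _, _, _, .bwd e he p, q => .bwd e he (p.append q)

lemma Walk.gainSum_append {H : G.Subgraph} : ∀ {u v w : V} (p : Walk G H u v)
    (q : Walk G H v w), (p.append q).gainSum = p.gainSum + q.gainSum
  | _, _, _, .nil _ _, q => by simp [append, gainSum]
  | _, _, _, .fwd e he p, q => by
      simp only [append, gainSum, gainSum_append p q]; ring
  | _, _, _, .bwd e he p, q => by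
      simp only [append, gainSum, gainSum_append p q]; ring

def Walk.reverse {H : G.Subgraph} : ∀ {u v : V}, Walk G H u v → Walk G H v u
  | _, _, .nil v hv => .nil v hv
  | _, _, .fwd e he p => p.reverse.append (.bwd e he (.nil _ (H.src_mem e he)))
  | _, _, .bwd e he p => p.reverse.append (.fwd e he (.nil _ (H.tgt_mem e he)))

lemma Walk.gainSum_reverse {H : G.Subgraph} : ∀ {u v : V} (p : Walk G H u v),
    p.reverse.gainSum = - p.gainSum
  | _, _, .nil _ _ => by simp [reverse, gainSum]
  | _, _, .fwd e he p => by
      simp only [reverse, gainSum, gainSum_append, gainSum_reverse p]; ring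
  | _, _, .bwd e he p => by
      simp only [reverse, gainSum, gainSum_append, gainSum_reverse p]; ring

def Walk.map {H K : G.Subgraph} (hV : H.verts ⊆ K.verts) (hE : H.edges ⊆ K.edges) :
    ∀ {u v : V}, Walk G H u v → Walk G K u v
  | _, _, .nil v hv => .nil v (hV hv)
  | _, _, .fwd e he p => .fwd e (hE he) (p.map hV hE)
  | _, _, .bwd e he p => .bwd e (hE he) (p.map hV hE)

lemma Walk.gainSum_map {H K : G.Subgraph} (hV : H.verts ⊆ K.verts) (hE : H.edges ⊆ K.edges) :
    ∀ {u v : V} (p : Walk G H u v), (p.map hV hE).gainSum = p.gainSum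
  | _, _, .nil _ _ => rfl
  | _, _, .fwd e he p => by simp only [map, gainSum, gainSum_map hV hE p]
  | _, _, .bwd e he p => by simp only [map, gainSum, gainSum_map hV hE p]

lemma Subgraph.Balanced.mono {H K : G.Subgraph} (hK : K.Balanced)
    (hV : H.verts ⊆ K.verts) (hE : H.edges ⊆ K.edges) : H.Balanced := by
  intro v w
  have := hK v (w.map hV hE)
  rwa [Walk.gainSum_map] at this

/-- A potential function for a subgraph. -/
def Subgraph.HasPotential (H : G.Subgraph) (φ : V → ℤ) : Prop :=
  ∀ e ∈ H.edges, G.gain e = φ (G.tgt e) - φ (G.src e)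

lemma Subgraph.HasPotential.gainSum_eq {H : G.Subgraph} {φ : V → ℤ}
    (hφ : H.HasPotential φ) : ∀ {u v : V} (w : Walk G H u v), w.gainSum = φ v - φ u := by
  intro u v w
  induction w with
  | nil v hv => simp [Walk.gainSum]
  | fwd e he w ih => simp only [Walk.gainSum, ih, hφ e he]; ring
  | bwd e he w ih => simp only [Walk.gainSum, ih, hφ e he]; ring

lemma Subgraph.balanced_of_potential {H : G.Subgraph} {φ : V → ℤ}
    (hφ : H.HasPotential φ) : H.Balanced := by
  intro v w
  rw [hφ.gainSum_eq w]; ring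

lemma Subgraph.Connected.exists_potential {H : G.Subgraph} (hc : H.Connected)
    (hb : H.Balanced) : ∃ φ : V → ℤ, H.HasPotential φ := by
  classical
  obtain ⟨⟨v0, hv0⟩, hconn⟩ := hc
  have key : ∀ {u v : V} (w1 w2 : Walk G H u v), w1.gainSum = w2.gainSum := by
    intro u v w1 w2
    have h := hb u (w1.append w2.reverse)
    rw [Walk.gainSum_append, Walk.gainSum_reverse] at h
    omega
  refine ⟨fun v => if h : v ∈ H.verts then (hconn v0 hv0 v h).some.gainSum else 0, ?_⟩
  intro e he
  have hs := H.src_mem e he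
  have ht := H.tgt_mem e he
  simp only [dif_pos hs, dif_pos ht]
  have h := key ((hconn v0 hv0 _ hs).some.append (.fwd e he (.nil _ ht)))
    (hconn v0 hv0 _ ht).some
  rw [Walk.gainSum_append] at h
  simp only [Walk.gainSum] at h
  omega

/-- The connected component of `v` in `H`. -/
def Subgraph.comp (H : G.Subgraph) (v : V) : G.Subgraph where
  verts := {u | Nonempty (Walk G H v u)}
  edges := {e | e ∈ H.edges ∧ Nonempty (Walk G H v (G.src e))}
  src_mem := fun _ he => he.2
  tgt_mem := fun e he => he.2.elim fun w =>
    ⟨w.append (.fwd e he.1 (.nil _ (H.tgt_mem e he.1)))⟩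

/-- The complement of the connected component of `v` in `H`. -/
def Subgraph.compRest (H : G.Subgraph) (v : V) : G.Subgraph where
  verts := H.verts \ (H.comp v).verts
  edges := H.edges \ (H.comp v).edges
  src_mem := fun e he => ⟨H.src_mem e he.1, fun hw => he.2 ⟨he.1, hw⟩⟩
  tgt_mem := fun e he => ⟨H.tgt_mem e he.1, fun hw =>
    he.2 ⟨he.1, hw.elim fun w => ⟨w.append (.bwd e he.1 (.nil _ (H.src_mem e he.1)))⟩⟩⟩

lemma Subgraph.comp_verts_subset (H : G.Subgraph) (v : V) :
    (H.comp v).verts ⊆ H.verts := fun _ hu => hu.elim fun w => w.end_mem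

lemma Subgraph.comp_edges_subset (H : G.Subgraph) (v : V) :
    (H.comp v).edges ⊆ H.edges := fun _ he => he.1

lemma Subgraph.verts_eq_comp_union (H : G.Subgraph) (v : V) :
    H.verts = (H.comp v).verts ∪ (H.compRest v).verts :=
  (Set.union_diff_cancel (H.comp_verts_subset v)).symm

lemma Subgraph.edges_eq_comp_union (H : G.Subgraph) (v : V) :
    H.edges = (H.comp v).edges ∪ (H.compRest v).edges :=
  (Set.union_diff_cancel (H.comp_edges_subset v)).symm

lemma fCount_comp_add_compRest [Fintype V] [Fintype E] (H : G.Subgraph) (v : V) :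
    fCount (H.comp v) + fCount (H.compRest v) = fCount H := by
  have hdv : Disjoint (H.comp v).verts (H.compRest v).verts := Set.disjoint_sdiff_right
  have hde : Disjoint (H.comp v).edges (H.compRest v).edges := Set.disjoint_sdiff_right
  have hv : H.verts.ncard = (H.comp v).verts.ncard + (H.compRest v).verts.ncard := by
    rw [H.verts_eq_comp_union v,
      Set.ncard_union_eq hdv (Set.toFinite _) (Set.toFinite _)]
  have he : H.edges.ncard = (H.comp v).edges.ncard + (H.compRest v).edges.ncard := by
    rw [H.edges_eq_comp_union v,
      Set.ncard_union_eq hde (Set.toFinite _) (Set.toFinite _)]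
  simp only [fCount]
  omega

lemma connected_of_fCount_le [Fintype V] [Fintype E] (hsp : Sparse 2 G) (H : G.Subgraph)
    (hne : H.verts.Nonempty) (hf : fCount H ≤ 3) : H.Connected := by
  by_contra hc
  rw [Subgraph.Connected] at hc
  push_neg at hc
  obtain ⟨u, hu, v, hv, hw⟩ := hc hne
  have h1 : 2 ≤ fCount (H.comp u) := hsp.1 _ ⟨u, ⟨.nil u hu⟩⟩
  have h2 : 2 ≤ fCount (H.compRest u) := hsp.1 _ ⟨v, hv, not_nonempty_iff.mpr hw⟩
  have h3 := fCount_comp_add_compRest H u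
  omega

lemma eq_two_singletons [Fintype V] [Fintype E] (hsp : Sparse 2 G) (H : G.Subgraph)
    (hb : H.Balanced) (hne : H.verts.Nonempty) (hnc : ¬ H.Connected) (hf : fCount H ≤ 4) :
    ∃ a b, a ≠ b ∧ H.verts = {a, b} ∧ H.edges = ∅ := by
  rw [Subgraph.Connected] at hnc
  push_neg at hnc
  obtain ⟨u, hu, v, hv, hw⟩ := hnc hne
  have h1 : 2 ≤ fCount (H.comp u) := hsp.1 _ ⟨u, ⟨.nil u hu⟩⟩
  have h2 : 2 ≤ fCount (H.compRest u) := hsp.1 _ ⟨v, hv, not_nonempty_iff.mpr hw⟩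
  have h3 := fCount_comp_add_compRest H u
  have hCbal : (H.comp u).Balanced :=
    hb.mono (H.comp_verts_subset u) (H.comp_edges_subset u)
  have hDbal : (H.compRest u).Balanced :=
    hb.mono Set.diff_subset Set.diff_subset
  have hCE : (H.comp u).edges = ∅ := by
    by_contra h
    have := hsp.2 _ hCbal (Set.nonempty_iff_ne_empty.2 h)
    omega
  have hDE : (H.compRest u).edges = ∅ := by
    by_contra h
    have := hsp.2 _ hDbal (Set.nonempty_iff_ne_empty.2 h)
    omega
  have hC2 : fCount (H.comp u) = 2 := by omega
  have hD2 : fCount (H.compRest u) = 2 := by omega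
  rw [fCount, hCE] at hC2
  rw [fCount, hDE] at hD2
  simp only [Set.ncard_empty, Nat.cast_zero, sub_zero] at hC2 hD2
  have hC1 : (H.comp u).verts.ncard = 1 := by omega
  have hD1 : (H.compRest u).verts.ncard = 1 := by omega
  obtain ⟨a, ha⟩ := Set.ncard_eq_one.1 hC1
  obtain ⟨b, hb'⟩ := Set.ncard_eq_one.1 hD1
  refine ⟨a, b, ?_, ?_, ?_⟩
  · intro hab
    have haC : a ∈ (H.comp u).verts := ha ▸ rfl
    have hbD : b ∈ (H.compRest u).verts := hb' ▸ rfl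
    exact hbD.2 (hab ▸ haC)
  · rw [H.verts_eq_comp_union u, ha, hb']
    ext x; simp [Set.mem_insert_iff]; tauto
  · rw [H.edges_eq_comp_union u, hCE, hDE]
    simp

lemma union_balanced_of_inter_connected {H K : G.Subgraph}
    (hHc : H.Connected) (hKc : K.Connected) (hHb : H.Balanced) (hKb : K.Balanced)
    (hIc : (H.inter K).Connected) : (H.union K).Balanced := by
  classical
  obtain ⟨φH, hφH⟩ := hHc.exists_potential hHb
  obtain ⟨φK, hφK⟩ := hKc.exists_potential hKb
  obtain ⟨⟨x0, hx0⟩, hIconn⟩ := hIc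
  set c : ℤ := φH x0 - φK x0 with hc
  have hIV : (H.inter K).verts ⊆ H.verts := Set.inter_subset_left
  have hIE : (H.inter K).edges ⊆ H.edges := Set.inter_subset_left
  have hIV' : (H.inter K).verts ⊆ K.verts := Set.inter_subset_right
  have hIE' : (H.inter K).edges ⊆ K.edges := Set.inter_subset_right
  have hconst : ∀ x ∈ (H.inter K).verts, φH x - φK x = c := by
    intro x hx
    obtain ⟨w⟩ := hIconn x0 hx0 x hx
    have h1 := hφH.gainSum_eq (w.map hIV hIE)
    have h2 := hφK.gainSum_eq (w.map hIV' hIE')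
    rw [Walk.gainSum_map] at h1 h2
    omega
  apply Subgraph.balanced_of_potential
    (φ := fun x => if x ∈ H.verts then φH x else φK x + c)
  intro e he
  rcases he with he | he
  · have hs : G.src e ∈ H.verts := H.src_mem e he
    have ht : G.tgt e ∈ H.verts := H.tgt_mem e he
    simp only [if_pos hs, if_pos ht]
    exact hφH e he
  · have hs : G.src e ∈ K.verts := K.src_mem e he
    have ht : G.tgt e ∈ K.verts := K.tgt_mem e he
    have hval : ∀ x ∈ K.verts,
        (if x ∈ H.verts then φH x else φK x + c) = φK x + c := by
      intro x hx
      split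
      · next hxH => have := hconst x ⟨hxH, hx⟩; omega
      · rfl
    simp only [hval _ hs, hval _ ht]
    rw [hφK e he]; ring

lemma fCount_union_add_inter [Fintype V] [Fintype E] (H K : G.Subgraph) :
    fCount (H.union K) + fCount (H.inter K) = fCount H + fCount K := by
  have h1 := Set.ncard_union_add_ncard_inter H.verts K.verts
    (Set.toFinite _) (Set.toFinite _)
  have h2 := Set.ncard_union_add_ncard_inter H.edges K.edges
    (Set.toFinite _) (Set.toFinite _)
  simp only [fCount, Subgraph.union, Subgraph.inter]
  omega

lemma Subgraph.edges_nonempty_of_fCount_eq_three (H : G.Subgraph) (hf : fCount H = 3) :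
    H.edges.Nonempty := by
  rw [Set.nonempty_iff_ne_empty]
  intro h
  rw [fCount, h] at hf
  simp only [Set.ncard_empty, Nat.cast_zero, sub_zero] at hf
  omega

end GainGraph

open GainGraph

/-- In a finite `(2,3,2)`-sparse `ℤ`-gain graph, if `H` and
`K` are `(2,3,2)`-tight subgraphs, at least one of which is balanced, whose
intersection has at least two vertices, then `H ∪ K` is `(2,3,2)`-tight, and
either `H ∩ K` is `(2,3,2)`-tight or `H ∩ K` consists of exactly two isolated
vertices and `H ∪ K` is unbalanced. -/
theorem stmt_15 {V E : Type*} [Fintype V] [Fintype E] (G : GainGraph V E)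
    (hsp : Sparse 2 G) (H K : G.Subgraph)
    (hH : H.Tight 2) (hK : K.Tight 2)
    (hbal : H.Balanced ∨ K.Balanced)
    (hcard : 2 ≤ (H.verts ∩ K.verts).ncard) :
    (H.union K).Tight 2 ∧
      ((H.inter K).Tight 2 ∨
        ((∃ u v : V, u ≠ v ∧ (H.inter K).verts = {u, v}) ∧
          (H.inter K).edges = ∅ ∧ ¬ (H.union K).Balanced)) := by
  classical
  set I := H.inter K with hIdef
  set U := H.union K with hUdef
  have hIV : I.verts = H.verts ∩ K.verts := rfl
  have hIne : I.verts.Nonempty := by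
    rw [hIV]
    exact Set.nonempty_of_ncard_ne_zero (by omega)
  have hmod := fCount_union_add_inter H K
  rw [← hUdef, ← hIdef] at hmod
  have hUne : U.verts.Nonempty := hIne.elim fun x hx => ⟨x, Or.inl hx.1⟩
  have hU2 : 2 ≤ fCount U := hsp.1 U hUne
  have hI2card : 2 ≤ (I.verts.ncard : ℤ) := by rw [hIV]; exact_mod_cast hcard
  -- rule out the singleton option for H and K
  have hHcard : 2 ≤ H.verts.ncard := by
    calc 2 ≤ (H.verts ∩ K.verts).ncard := hcard
    _ ≤ H.verts.ncard := Set.ncard_le_ncard Set.inter_subset_left (Set.toFinite _)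
  have hKcard : 2 ≤ K.verts.ncard := by
    calc 2 ≤ (H.verts ∩ K.verts).ncard := hcard
    _ ≤ K.verts.ncard := Set.ncard_le_ncard Set.inter_subset_right (Set.toFinite _)
  have hH' : fCount H = 2 ∨ (H.Balanced ∧ fCount H = 3) := by
    rcases hH with h | h | ⟨v, hv, -⟩
    · exact Or.inl h
    · exact Or.inr h
    · rw [hv] at hHcard; simp at hHcard
  have hK' : fCount K = 2 ∨ (K.Balanced ∧ fCount K = 3) := by
    rcases hK with h | h | ⟨v, hv, -⟩
    · exact Or.inl h
    · exact Or.inr h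
    · rw [hv] at hKcard; simp at hKcard
  -- I is balanced
  have hIbal : I.Balanced := by
    rcases hbal with hb | hb
    · exact hb.mono Set.inter_subset_left Set.inter_subset_left
    · exact hb.mono Set.inter_subset_right Set.inter_subset_right
  -- f(I) ≥ 3, and ≥ 4 if I has no edge
  have hI3 : 3 ≤ fCount I := by
    rcases Set.eq_empty_or_nonempty I.edges with h | h
    · rw [fCount, h]
      simp only [Set.ncard_empty, Nat.cast_zero, sub_zero]
      omega
    · exact hsp.2 I hIbal h
  rcases hH' with hHf | ⟨hHbal, hHf⟩
  · rcases hK' with hKf | ⟨hKbal, hKf⟩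
    · -- both f = 2 : impossible
      omega
    · -- f(H) = 2, K balanced with f(K) = 3
      have hUf : fCount U = 2 := by omega
      have hIf : fCount I = 3 := by omega
      exact ⟨Or.inl hUf, Or.inl (Or.inr (Or.inl ⟨hIbal, hIf⟩))⟩
  · rcases hK' with hKf | ⟨hKbal, hKf⟩
    · -- H balanced with f(H) = 3, f(K) = 2
      have hUf : fCount U = 2 := by omega
      have hIf : fCount I = 3 := by omega
      exact ⟨Or.inl hUf, Or.inl (Or.inr (Or.inl ⟨hIbal, hIf⟩))⟩
    · -- both balanced with f = 3
      have hHc : H.Connected := connected_of_fCount_le hsp H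
        (hIne.elim fun x hx => ⟨x, hx.1⟩) (by omega)
      have hKc : K.Connected := connected_of_fCount_le hsp K
        (hIne.elim fun x hx => ⟨x, hx.2⟩) (by omega)
      have hUedge : U.edges.Nonempty :=
        (H.edges_nonempty_of_fCount_eq_three hHf).elim fun e he => ⟨e, Or.inl he⟩
      have hIc_bal : I.Connected → U.Balanced := fun hIc =>
        union_balanced_of_inter_connected hHc hKc hHbal hKbal hIc
      have hI4 : fCount I ≤ 4 := by omega
      by_cases hIc : I.Connected
      · -- I connected : union balanced, f(U) ≥ 3, so f(I) = 3
        have hUbal : U.Balanced := hIc_bal hIc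
        have hU3 : 3 ≤ fCount U := hsp.2 U hUbal hUedge
        have hIf : fCount I = 3 := by omega
        have hUf : fCount U = 3 := by omega
        exact ⟨Or.inr (Or.inl ⟨hUbal, hUf⟩), Or.inl (Or.inr (Or.inl ⟨hIbal, hIf⟩))⟩
      · -- I disconnected : f(I) = 4, I is two isolated vertices, U unbalanced
        obtain ⟨a, b, hab, hva, hea⟩ := eq_two_singletons hsp I hIbal hIne hIc hI4
        have hIf : fCount I = 4 := by
          rw [fCount, hea, hva]
          rw [Set.ncard_pair hab]
          simp
        have hUf : fCount U = 2 := by omega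
        have hUnbal : ¬ U.Balanced := fun hUbal => by
          have := hsp.2 U hUbal hUedge
          omega
        exact ⟨Or.inl hUf, Or.inr ⟨⟨a, b, hab, hva⟩, hea, hUnbal⟩⟩
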